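/- (Lemma 2.1, linear-algebraic form.) Let n ≥ 2k ≥ 0, let e_1,...,e_n be the standard basis of ℂ^n, and let N : ℂ^n → ℂ^n be the linear map determined by N e_1 = 0, N e_{n−k+1} = 0, and N e_i = e_{i−1} for all other indices i. For a permutation w of {1,...,n}, set V_i = span_ℂ(e_{w(1)},...,e_{w(i)}) for 0 ≤ i ≤ n (so V_0 = 0). Then N V_i ⊆ V_{i−1} holds for all 1 ≤ i ≤ n if and only if w = w_{ℓ_1,...,ℓ_k} for some 1 ≤ ℓ_1 < ℓ_2 < ... < ℓ_k ≤ n. -/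

import Mathlib

open scoped BigOperators

/-- The permutation `w_{ℓ₁,…,ℓₖ}` of `{1,…,n}` (as a function `ℕ → ℕ`):
`w i = n - k + j` if `i = ℓ j` for some `1 ≤ j ≤ k`, and `w i = i - j` if
`ℓ j < i < ℓ (j+1)` (with conventions `ℓ 0 = 0`, `ℓ (k+1) = n+1`); here `j`
is recovered as the number of `r ∈ {1,…,k}` with `ℓ r ≤ i` (resp. `ℓ r < i`). -/
def wPerm (n k : ℕ) (ℓ : ℕ → ℕ) (i : ℕ) : ℕ :=
  if ∃ j ∈ Finset.Icc 1 k, ℓ j = i then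
    n - k + ((Finset.Icc 1 k).filter fun j => ℓ j ≤ i).card
  else
    i - ((Finset.Icc 1 k).filter fun j => ℓ j < i).card

/-- The conditions `1 ≤ ℓ 1 < ℓ 2 < ⋯ < ℓ k ≤ n`. -/
def goodL (n k : ℕ) (ℓ : ℕ → ℕ) : Prop :=
  (∀ j ∈ Finset.Icc 1 k, 1 ≤ ℓ j ∧ ℓ j ≤ n) ∧
    ∀ j j' : ℕ, 1 ≤ j → j < j' → j' ≤ k → ℓ j < ℓ j'

lemma goodL.injOn' {n k : ℕ} {ℓ : ℕ → ℕ} (hg : goodL n k ℓ)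
    {j j' : ℕ} (hj : j ∈ Finset.Icc 1 k) (hj' : j' ∈ Finset.Icc 1 k)
    (hne : ℓ j = ℓ j') : j = j' := by
  simp only [Finset.mem_Icc] at hj hj'
  by_contra hne'
  rcases Nat.lt_or_ge j j' with hlt | hge
  · exact absurd hne (Nat.ne_of_lt (hg.2 j j' hj.1 hlt hj'.2))
  · rcases Nat.lt_or_ge j' j with hlt | hge'
    · exact absurd hne.symm (Nat.ne_of_lt (hg.2 j' j hj'.1 hlt hj.2))
    · omega

lemma wPerm_hit {n k : ℕ} {ℓ : ℕ → ℕ} (hg : goodL n k ℓ)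
    {j : ℕ} (hj : j ∈ Finset.Icc 1 k) : wPerm n k ℓ (ℓ j) = n - k + j := by
  have hj' := hj
  simp only [Finset.mem_Icc] at hj'
  unfold wPerm
  rw [if_pos ⟨j, hj, rfl⟩]
  congr 1
  have : ((Finset.Icc 1 k).filter fun r => ℓ r ≤ ℓ j) = Finset.Icc 1 j := by
    ext r
    simp only [Finset.mem_filter, Finset.mem_Icc]
    constructor
    · rintro ⟨⟨h1, hk⟩, hle⟩
      refine ⟨h1, ?_⟩
      by_contra hc
      exact absurd hle (not_le.mpr (hg.2 j r hj'.1 (by omega) hk))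
    · rintro ⟨h1, hrj⟩
      refine ⟨⟨h1, le_trans hrj hj'.2⟩, ?_⟩
      rcases eq_or_lt_of_le hrj with rfl | hlt
      · exact le_refl _
      · exact le_of_lt (hg.2 r j h1 hlt hj'.2)
  rw [this, Nat.card_Icc]
  omega

lemma wPerm_miss {n k : ℕ} {ℓ : ℕ → ℕ} (h2k : 2 * k ≤ n) (hg : goodL n k ℓ)
    {i : ℕ} (h1 : 1 ≤ i) (h2 : i ≤ n) (hm : ∀ j ∈ Finset.Icc 1 k, ℓ j ≠ i) :
    ((Finset.Icc 1 k).filter fun j => ℓ j < i).card + wPerm n k ℓ i = i ∧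
      wPerm n k ℓ i ≤ n - k := by
  have hcond : ¬ ∃ j ∈ Finset.Icc 1 k, ℓ j = i := by
    rintro ⟨j, hj, hji⟩; exact hm j hj hji
  unfold wPerm
  rw [if_neg hcond]
  set c := ((Finset.Icc 1 k).filter fun j => ℓ j < i).card with hc
  have hc1 : c ≤ i - 1 := by
    have : c ≤ (Finset.Icc 1 (i - 1)).card := by
      apply Finset.card_le_card_of_injOn (fun j => ℓ j)
      · intro j hj
        simp only [Finset.mem_coe, Finset.mem_filter] at hj
        have := (hg.1 j hj.1).1
        simp only [Finset.mem_coe, Finset.mem_Icc]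
        omega
      · intro a ha b hb hab
        simp only [Finset.coe_filter, Set.mem_setOf_eq] at ha hb
        exact hg.injOn' ha.1 hb.1 hab
    rwa [Nat.card_Icc, Nat.add_sub_cancel] at this
  have hc2 : k ≤ c + (n - i) := by
    have hsplit := Finset.card_filter_add_card_filter_not
      (s := Finset.Icc 1 k) (p := fun j => ℓ j < i)
    have hle : ((Finset.Icc 1 k).filter fun j => ¬ ℓ j < i).card ≤ (Finset.Icc (i+1) n).card := by
      apply Finset.card_le_card_of_injOn (fun j => ℓ j)
      · intro j hj
        simp only [Finset.mem_coe, Finset.mem_filter, not_lt] at hj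
        have hb := (hg.1 j hj.1).2
        have hne := hm j hj.1
        simp only [Finset.mem_coe, Finset.mem_Icc]
        omega
      · intro a ha b hb hab
        simp only [Finset.coe_filter, Set.mem_setOf_eq] at ha hb
        exact hg.injOn' ha.1 hb.1 hab
    rw [Nat.card_Icc] at hle
    rw [Nat.card_Icc] at hsplit
    omega
  omega

lemma count_mono {n k : ℕ} {ℓ : ℕ → ℕ} (hg : goodL n k ℓ) {a b : ℕ} (hab : a ≤ b) :
    ((Finset.Icc 1 k).filter fun j => ℓ j < b).card ≤
      ((Finset.Icc 1 k).filter fun j => ℓ j < a).card + (b - a) := by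
  have hsub : ((Finset.Icc 1 k).filter fun j => ℓ j < b) ⊆
      ((Finset.Icc 1 k).filter fun j => ℓ j < a) ∪
        ((Finset.Icc 1 k).filter fun j => a ≤ ℓ j ∧ ℓ j < b) := by
    intro j hj
    simp only [Finset.mem_filter, Finset.mem_union] at hj ⊢
    rcases lt_or_ge (ℓ j) a with hlt | hge
    · exact Or.inl ⟨hj.1, hlt⟩
    · exact Or.inr ⟨hj.1, hge, hj.2⟩
  have hmid : ((Finset.Icc 1 k).filter fun j => a ≤ ℓ j ∧ ℓ j < b).card ≤ (Finset.Ico a b).card := by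
    apply Finset.card_le_card_of_injOn (fun j => ℓ j)
    · intro j hj
      simp only [Finset.mem_coe, Finset.mem_filter] at hj
      simp only [Finset.mem_coe, Finset.mem_Ico]
      exact hj.2
    · intro x hx y hy hxy
      simp only [Finset.coe_filter, Set.mem_setOf_eq] at hx hy
      exact hg.injOn' hx.1 hy.1 hxy
  calc ((Finset.Icc 1 k).filter fun j => ℓ j < b).card
      ≤ _ := Finset.card_le_card hsub
    _ ≤ _ := Finset.card_union_le _ _
    _ ≤ _ := by rw [Nat.card_Ico] at hmid; omega

theorem key_lemma (n k : ℕ)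
    (N : (Fin n → ℂ) →ₗ[ℂ] (Fin n → ℂ))
    (hN : ∀ i : Fin n, N (Pi.single i 1) =
      if (i : ℕ) = 0 ∨ (i : ℕ) = n - k then 0
      else Pi.single (⟨(i : ℕ) - 1, lt_of_le_of_lt (Nat.sub_le _ _) i.isLt⟩ : Fin n) 1)
    (w : Equiv.Perm (Fin n)) :
    (∀ i : Fin n,
        Submodule.map N
            (Submodule.span ℂ {v : Fin n → ℂ | ∃ r : Fin n, r ≤ i ∧ v = Pi.single (w r) 1}) ≤
          Submodule.span ℂ {v : Fin n → ℂ | ∃ r : Fin n, r < i ∧ v = Pi.single (w r) 1}) ↔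
      (∀ s r : Fin n, (w s : ℕ) + 1 = (w r : ℕ) → (w r : ℕ) ≠ n - k → s < r) := by
  have hsetlt : ∀ i : Fin n, {v : Fin n → ℂ | ∃ r, r < i ∧ v = Pi.single (w r) 1} =
      ⇑(Pi.basisFun ℂ (Fin n)) '' {m : Fin n | ∃ r, r < i ∧ w r = m} := by
    intro i; ext v
    simp only [Set.mem_setOf_eq, Set.mem_image, Pi.basisFun_apply]
    constructor
    · rintro ⟨r, hr, rfl⟩; exact ⟨w r, ⟨r, hr, rfl⟩, rfl⟩
    · rintro ⟨m, ⟨r, hr, rfl⟩, rfl⟩; exact ⟨r, hr, rfl⟩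
  constructor
  · intro hflag s r hsr hne
    have h0 : (w r : ℕ) ≠ 0 := by omega
    have h1 : Pi.single (w r) (1 : ℂ) ∈
        Submodule.span ℂ {v : Fin n → ℂ | ∃ t : Fin n, t ≤ r ∧ v = Pi.single (w t) 1} :=
      Submodule.subset_span ⟨r, le_refl r, rfl⟩
    have h2 := hflag r (Submodule.mem_map_of_mem h1)
    rw [hN (w r), if_neg (by push_neg; exact ⟨h0, hne⟩)] at h2
    have heq : (⟨((w r : ℕ)) - 1, lt_of_le_of_lt (Nat.sub_le _ _) (w r).isLt⟩ : Fin n) = w s :=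
      Fin.ext (by simp; omega)
    rw [heq] at h2
    rw [hsetlt r, ← Pi.basisFun_apply ℂ (Fin n) (w s)] at h2
    have h3 := (Pi.basisFun ℂ (Fin n)).self_mem_span_image.mp h2
    obtain ⟨t, ht, hts⟩ := h3
    rwa [← w.injective hts]
  · intro hP i
    rw [Submodule.map_span]
    apply Submodule.span_le.mpr
    rintro v ⟨x, ⟨t, ht, rfl⟩, rfl⟩
    rw [hN (w t)]
    by_cases hc : ((w t : ℕ)) = 0 ∨ ((w t : ℕ)) = n - k
    · rw [if_pos hc]; exact Submodule.zero_mem _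
    · rw [if_neg hc]
      push_neg at hc
      set s := w.symm (⟨(w t : ℕ) - 1, lt_of_le_of_lt (Nat.sub_le _ _) (w t).isLt⟩ : Fin n) with hs
      have hws : w s = ⟨(w t : ℕ) - 1, lt_of_le_of_lt (Nat.sub_le _ _) (w t).isLt⟩ :=
        w.apply_symm_apply _
      have hv : (w s : ℕ) = (w t : ℕ) - 1 := by rw [hws]
      have hlt : s < t := hP s t (by omega) hc.2
      apply Submodule.subset_span
      exact ⟨s, lt_of_lt_of_le hlt ht, by rw [hws]⟩

theorem comb_lemma (n k : ℕ) (h : 2 * k ≤ n) (w : Equiv.Perm (Fin n)) :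
    (∀ s r : Fin n, (w s : ℕ) + 1 = (w r : ℕ) → (w r : ℕ) ≠ n - k → s < r) ↔
      (∃ ℓ : ℕ → ℕ, goodL n k ℓ ∧
        ∀ i : Fin n, (w i : ℕ) + 1 = wPerm n k ℓ ((i : ℕ) + 1)) := by
  constructor
  · intro hP
    -- monotonicity of w.symm on each block
    have mono : ∀ c : ℕ, ∀ m m' : Fin n, (m' : ℕ) = (m : ℕ) + c + 1 →
        (n - k ≤ (m : ℕ) ∨ (m' : ℕ) < n - k) → w.symm m < w.symm m' := by
      intro c
      induction c with
      | zero =>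
        intro m m' hmm hblk
        apply hP (w.symm m) (w.symm m')
        · rw [Equiv.apply_symm_apply, Equiv.apply_symm_apply]; omega
        · rw [Equiv.apply_symm_apply]; omega
      | succ c ih =>
        intro m m' hmm hblk
        have hmid : ((m : ℕ) + c + 1) < n := by
          have := m'.isLt; omega
        set mid : Fin n := ⟨(m : ℕ) + c + 1, hmid⟩ with hmiddef
        have h1 : w.symm m < w.symm mid := by
          apply ih m mid rfl
          show n - k ≤ (m : ℕ) ∨ (m : ℕ) + c + 1 < n - k
          omega
        have h2 : w.symm mid < w.symm m' := by
          apply hP (w.symm mid) (w.symm m')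
          · rw [Equiv.apply_symm_apply, Equiv.apply_symm_apply]
            show (m : ℕ) + c + 1 + 1 = (m' : ℕ); omega
          · rw [Equiv.apply_symm_apply]; omega
        exact lt_trans h1 h2
    set ℓ0 : ℕ → ℕ := fun j =>
      if hj : 1 ≤ j ∧ j ≤ k then
        ((w.symm ⟨n - k + j - 1, by omega⟩ : Fin n) : ℕ) + 1
      else 0 with hℓ0
    have hval : ∀ j (h1 : 1 ≤ j) (h2 : j ≤ k) (pf : n - k + j - 1 < n),
        ℓ0 j = ((w.symm ⟨n - k + j - 1, pf⟩ : Fin n) : ℕ) + 1 := by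
      intro j h1 h2 pf
      simp only [hℓ0]
      rw [dif_pos ⟨h1, h2⟩]
    have hg0 : goodL n k ℓ0 := by
      constructor
      · intro j hj
        simp only [Finset.mem_Icc] at hj
        rw [hval j hj.1 hj.2 (by omega)]
        exact ⟨Nat.le_add_left 1 _, (w.symm _).isLt⟩
      · intro j j' h1 hlt h2
        rw [hval j h1 (by omega) (by omega), hval j' (by omega) h2 (by omega)]
        have : w.symm (⟨n - k + j - 1, by omega⟩ : Fin n) <
            w.symm (⟨n - k + j' - 1, by omega⟩ : Fin n) := by
          apply mono (j' - j - 1)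
          · show n - k + j' - 1 = (n - k + j - 1) + (j' - j - 1) + 1; omega
          · left; show n - k ≤ n - k + j - 1; omega
        have hlt' : ((w.symm (⟨n - k + j - 1, by omega⟩ : Fin n)) : ℕ) <
            ((w.symm (⟨n - k + j' - 1, by omega⟩ : Fin n)) : ℕ) := this
        omega
    refine ⟨ℓ0, hg0, ?_⟩
    intro i
    by_cases hcase : n - k ≤ (w i : ℕ)
    · -- second block: hit
      have hilt := (w i).isLt
      set j := (w i : ℕ) - (n - k) + 1 with hjdef
      have hj1 : 1 ≤ j ∧ j ≤ k := by omega
      have hpf : n - k + j - 1 < n := by omega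
      have hfin : (⟨n - k + j - 1, hpf⟩ : Fin n) = w i := Fin.ext (by show n - k + j - 1 = (w i : ℕ); omega)
      have hℓj : ℓ0 j = (i : ℕ) + 1 := by
        rw [hval j hj1.1 hj1.2 hpf, hfin, Equiv.symm_apply_apply]
      have := wPerm_hit hg0 (Finset.mem_Icc.mpr hj1)
      rw [hℓj] at this
      rw [this]; omega
    · -- first block: miss
      push_neg at hcase
      have hmiss : ∀ j ∈ Finset.Icc 1 k, ℓ0 j ≠ (i : ℕ) + 1 := by
        intro j hj heq
        simp only [Finset.mem_Icc] at hj
        rw [hval j hj.1 hj.2 (by omega)] at heq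
        have h1 : (w.symm (⟨n - k + j - 1, by omega⟩ : Fin n)) = i := Fin.ext (by omega)
        have h2 := congrArg (fun x => ((w x : Fin n) : ℕ)) h1
        simp only [Equiv.apply_symm_apply] at h2
        have : n - k + j - 1 = (w i : ℕ) := h2
        omega
      obtain ⟨hsum, hle⟩ := wPerm_miss h hg0 (Nat.le_add_left 1 _) i.isLt hmiss
      -- compute the count
      have hcard : ((Finset.Icc 1 k).filter fun j => ℓ0 j < (i : ℕ) + 1).card + (w i : ℕ) = (i : ℕ) := by
        set T : Finset (Fin n) := Finset.Iio i with hT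
        have hTcard : T.card = (i : ℕ) := Fin.card_Iio i
        have hsplit := Finset.card_filter_add_card_filter_not
          (s := T) (p := fun s => (w s : ℕ) < n - k)
        have h1 : (T.filter fun s => (w s : ℕ) < n - k) = (Finset.Iio (w i)).image ⇑w.symm := by
          ext s
          simp only [hT, Finset.mem_filter, Finset.mem_Iio, Finset.mem_image]
          constructor
          · rintro ⟨hsi, hsnk⟩
            refine ⟨w s, ?_, w.symm_apply_apply s⟩
            -- w s < w i
            rcases lt_trichotomy ((w s : ℕ)) ((w i : ℕ)) with hlt | heq | hgt
            · exact hlt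
            · exact absurd (w.injective (Fin.ext heq)) (by intro hq; rw [hq] at hsi; exact lt_irrefl _ hsi)
            · have := mono ((w s : ℕ) - (w i : ℕ) - 1) (w i) (w s) (by omega) (by omega)
              rw [Equiv.symm_apply_apply, Equiv.symm_apply_apply] at this
              exact absurd hsi (not_lt.mpr (le_of_lt this))
          · rintro ⟨m, hm, rfl⟩
            have hwm : (w (w.symm m) : ℕ) = (m : ℕ) := by rw [Equiv.apply_symm_apply]
            have hmlt : (m : ℕ) < (w i : ℕ) := hm
            constructor
            · have := mono ((w i : ℕ) - (m : ℕ) - 1) m (w i) (by omega) (by omega)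
              rw [Equiv.symm_apply_apply] at this
              exact this
            · omega
        have h1c : (T.filter fun s => (w s : ℕ) < n - k).card = (w i : ℕ) := by
          rw [h1, Finset.card_image_of_injective _ w.symm.injective, Fin.card_Iio]
        have h2 : (T.filter fun s => ¬ (w s : ℕ) < n - k).card =
            ((Finset.Icc 1 k).filter fun j => ℓ0 j < (i : ℕ) + 1).card := by
          apply Finset.card_bij (fun s _ => (w s : ℕ) - (n - k) + 1)
          · intro s hs
            simp only [hT, Finset.mem_filter, Finset.mem_Iio, not_lt] at hs
            obtain ⟨hsi, hsnk⟩ := hs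
            have hslt := (w s).isLt
            refine Finset.mem_filter.mpr ⟨Finset.mem_Icc.mpr ⟨by omega, by omega⟩, ?_⟩
            rw [hval _ (by omega) (by omega) (by omega)]
            have hfin : (⟨n - k + ((w s : ℕ) - (n - k) + 1) - 1, by omega⟩ : Fin n) = w s :=
              Fin.ext (by show n - k + ((w s : ℕ) - (n - k) + 1) - 1 = (w s : ℕ); omega)
            rw [hfin, Equiv.symm_apply_apply]
            have : (s : ℕ) < (i : ℕ) := hsi
            omega
          · intro s1 hs1 s2 hs2 heq
            simp only [hT, Finset.mem_filter, Finset.mem_Iio, not_lt] at hs1 hs2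
            apply w.injective
            exact Fin.ext (by omega)
          · intro j hj
            simp only [Finset.mem_filter, Finset.mem_Icc] at hj
            obtain ⟨⟨hj1, hjk⟩, hjlt⟩ := hj
            rw [hval j hj1 hjk (by omega)] at hjlt
            refine ⟨w.symm ⟨n - k + j - 1, by omega⟩, ?_, ?_⟩
            · simp only [hT, Finset.mem_filter, Finset.mem_Iio, not_lt]
              constructor
              · exact Fin.lt_def.mpr (by omega)
              · rw [Equiv.apply_symm_apply]
                show n - k ≤ n - k + j - 1; omega
            · rw [Equiv.apply_symm_apply]
              show n - k + j - 1 - (n - k) + 1 = j; omega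
        omega
      omega
  · rintro ⟨ℓ, hg, hform⟩ s r hsr hrnk
    by_cases hcase : n - k < (w r : ℕ)
    · -- second block: both hit
      have hrhit : ∃ j ∈ Finset.Icc 1 k, ℓ j = (r : ℕ) + 1 := by
        by_contra hmiss
        push_neg at hmiss
        obtain ⟨_, hle⟩ := wPerm_miss h hg (Nat.le_add_left 1 _) r.isLt hmiss
        rw [← hform r] at hle; omega
      obtain ⟨j, hj, hℓj⟩ := hrhit
      have hWr := wPerm_hit hg hj
      rw [hℓj, ← hform r] at hWr
      have hshit : ∃ j ∈ Finset.Icc 1 k, ℓ j = (s : ℕ) + 1 := by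
        by_contra hmiss
        push_neg at hmiss
        obtain ⟨_, hle⟩ := wPerm_miss h hg (Nat.le_add_left 1 _) s.isLt hmiss
        rw [← hform s] at hle; omega
      obtain ⟨j', hj', hℓj'⟩ := hshit
      have hWs := wPerm_hit hg hj'
      rw [hℓj', ← hform s] at hWs
      simp only [Finset.mem_Icc] at hj hj'
      have hlt : ℓ j' < ℓ j := hg.2 j' j hj'.1 (by omega) hj.2
      rw [hℓj, hℓj'] at hlt
      exact Fin.lt_def.mpr (by omega)
    · -- first block: both miss
      push_neg at hcase
      have hrlt : (w r : ℕ) < n - k := by omega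
      have hrmiss : ∀ j ∈ Finset.Icc 1 k, ℓ j ≠ (r : ℕ) + 1 := by
        intro j hj heq
        have := wPerm_hit hg hj
        rw [heq, ← hform r] at this
        simp only [Finset.mem_Icc] at hj
        omega
      have hsmiss : ∀ j ∈ Finset.Icc 1 k, ℓ j ≠ (s : ℕ) + 1 := by
        intro j hj heq
        have := wPerm_hit hg hj
        rw [heq, ← hform s] at this
        simp only [Finset.mem_Icc] at hj
        omega
      obtain ⟨hsumr, _⟩ := wPerm_miss h hg (Nat.le_add_left 1 _) r.isLt hrmiss
      obtain ⟨hsums, _⟩ := wPerm_miss h hg (Nat.le_add_left 1 _) s.isLt hsmiss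
      rw [← hform r] at hsumr
      rw [← hform s] at hsums
      by_contra hge
      have hrs : (r : ℕ) ≤ (s : ℕ) := by
        rw [Fin.not_lt] at hge
        exact hge
      have hcm := count_mono hg (a := (r : ℕ) + 1) (b := (s : ℕ) + 1) (by omega)
      omega

/-- Lemma 2.1 (linear-algebraic form): for the nilpotent operator `N` with two
Jordan blocks of sizes `n-k` and `k` (so `N e₁ = 0`, `N e_{n-k+1} = 0`, and
`N eᵢ = e_{i-1}` otherwise; here indices are 0-based, so `e_i = Pi.single i 1`
for `i : Fin n`), the flag `V_i = span(e_{w(1)},…,e_{w(i)})` satisfies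
`N V_i ⊆ V_{i-1}` for all `i` iff `w = w_{ℓ₁,…,ℓₖ}` for some
`1 ≤ ℓ₁ < ⋯ < ℓₖ ≤ n`. -/
theorem springer_fixed_points (n k : ℕ) (h : 2 * k ≤ n)
    (N : (Fin n → ℂ) →ₗ[ℂ] (Fin n → ℂ))
    (hN : ∀ i : Fin n, N (Pi.single i 1) =
      if (i : ℕ) = 0 ∨ (i : ℕ) = n - k then 0
      else Pi.single (⟨(i : ℕ) - 1, lt_of_le_of_lt (Nat.sub_le _ _) i.isLt⟩ : Fin n) 1)
    (w : Equiv.Perm (Fin n)) :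
    (∀ i : Fin n,
        Submodule.map N
            (Submodule.span ℂ {v : Fin n → ℂ | ∃ r : Fin n, r ≤ i ∧ v = Pi.single (w r) 1}) ≤
          Submodule.span ℂ {v : Fin n → ℂ | ∃ r : Fin n, r < i ∧ v = Pi.single (w r) 1}) ↔
      (∃ ℓ : ℕ → ℕ, goodL n k ℓ ∧
        ∀ i : Fin n, (w i : ℕ) + 1 = wPerm n k ℓ ((i : ℕ) + 1)) := by
  exact (key_lemma n k N hN w).trans (comb_lemma n k h w)
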